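/- Let σ : ℝ → ℝ be a continuous sigmoidal function, i.e., σ(t) → 1 as t → +∞ and σ(t) → 0 as t → −∞. Let K ⊂ ℝ^n be compact and let g : K → ℝ be continuous. Then for every ε > 0 there exist a finite number m of hidden neurons, output weights a_1,…,a_m ∈ ℝ, input weight vectors w_1,…,w_m ∈ ℝ^n, biases b_1,…,b_m ∈ ℝ, and an output bias b ∈ ℝ, such that the single-hidden-layer network f(x) = Σ_{i=1}^m a_i σ(⟨w_i, x⟩ + b_i) + b satisfies |f(x) − g(x)| < ε for all x ∈ K. -/

import Mathlib

open Filter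

section AuxLemmas
open Finset

set_option maxHeartbeats 1000000

/-- A continuous function with finite limits at both infinities is globally bounded. -/
lemma sigmoid_bdd (σ : ℝ → ℝ) (hσ_cont : Continuous σ)
    (hσ_top : Tendsto σ atTop (nhds 1)) (hσ_bot : Tendsto σ atBot (nhds 0)) :
    ∃ B : ℝ, 0 ≤ B ∧ ∀ t, |σ t| ≤ B := by
  have h1 : ∀ᶠ t in atTop, |σ t - 1| < 1 := by
    have := Metric.tendsto_nhds.mp hσ_top 1 one_pos
    simpa [Real.dist_eq] using this
  obtain ⟨T₂, hT₂⟩ := eventually_atTop.mp h1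
  have h2 : ∀ᶠ t in atBot, |σ t - 0| < 1 := by
    have := Metric.tendsto_nhds.mp hσ_bot 1 one_pos
    simpa [Real.dist_eq] using this
  obtain ⟨T₁, hT₁⟩ := eventually_atBot.mp h2
  obtain ⟨C, hC⟩ := (isCompact_Icc (a := T₁) (b := T₂)).exists_bound_of_continuousOn
    hσ_cont.continuousOn
  refine ⟨max C 2, le_trans (by norm_num) (le_max_right _ _), fun t => ?_⟩
  rcases le_or_gt t T₁ with h | h
  · have := hT₁ t h
    rw [sub_zero] at this
    exact le_trans this.le (le_trans (by norm_num) (le_max_right _ _))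
  rcases le_or_gt T₂ t with h' | h'
  · have := hT₂ t h'
    have : |σ t| ≤ 2 := by
      have h3 := abs_sub_abs_le_abs_sub (σ t) 1
      simp only [abs_one] at h3
      linarith [this]
    exact le_trans this (le_max_right _ _)
  · have := hC t ⟨h.le, h'.le⟩
    rw [Real.norm_eq_abs] at this
    exact le_trans this (le_max_left _ _)

/-- Tail bounds for a sigmoidal function. -/
lemma sigmoid_tails (σ : ℝ → ℝ)
    (hσ_top : Tendsto σ atTop (nhds 1)) (hσ_bot : Tendsto σ atBot (nhds 0))
    (η : ℝ) (hη : 0 < η) :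
    ∃ Λ : ℝ, 0 < Λ ∧ (∀ s, Λ ≤ s → |σ s - 1| ≤ η) ∧ (∀ s, s ≤ -Λ → |σ s| ≤ η) := by
  have h1 : ∀ᶠ t in atTop, |σ t - 1| < η := by
    have := Metric.tendsto_nhds.mp hσ_top η hη
    simpa [Real.dist_eq] using this
  obtain ⟨T₂, hT₂⟩ := eventually_atTop.mp h1
  have h2 : ∀ᶠ t in atBot, |σ t - 0| < η := by
    have := Metric.tendsto_nhds.mp hσ_bot η hη
    simpa [Real.dist_eq] using this
  obtain ⟨T₁, hT₁⟩ := eventually_atBot.mp h2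
  refine ⟨max (max T₂ (-T₁)) 1, lt_of_lt_of_le one_pos (le_max_right _ _), fun s hs => ?_, fun s hs => ?_⟩
  · exact (hT₂ s (le_trans (le_trans (le_max_left _ _) (le_max_left _ _)) hs)).le
  · have : s ≤ T₁ := by
      have h3 : -T₁ ≤ max (max T₂ (-T₁)) 1 := le_trans (le_max_right _ _) (le_max_left _ _)
      linarith
    have := hT₁ s this
    rw [sub_zero] at this
    exact this.le

/-- One-dimensional universal approximation: a continuous function on `[-M, M]` is
uniformly approximated by one-hidden-layer networks `t ↦ ∑ aⱼ σ(λⱼ t + bⱼ) + c`. -/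
lemma oneD (σ : ℝ → ℝ) (hσ_cont : Continuous σ)
    (hσ_top : Tendsto σ atTop (nhds 1)) (hσ_bot : Tendsto σ atBot (nhds 0))
    (h : ℝ → ℝ) (hh : Continuous h) (M δ : ℝ) (hM : 0 < M) (hδ : 0 < δ) :
    ∃ (m : ℕ) (a lam b : Fin m → ℝ) (c : ℝ), ∀ t ∈ Set.Icc (-M) M,
      |(∑ j, a j * σ (lam j * t + b j) + c) - h t| < δ := by
  obtain ⟨B, hB0, hB⟩ := sigmoid_bdd σ hσ_cont hσ_top hσ_bot
  set δ' := δ / (B + 3) with hδ'def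
  have hδ'0 : 0 < δ' := div_pos hδ (by linarith)
  have hδ'sum : (B + 3) * δ' = δ := by
    rw [hδ'def]; field_simp
  -- uniform continuity modulus
  have huc := (isCompact_Icc (a := -M) (b := M)).uniformContinuousOn_of_continuous
    hh.continuousOn
  rw [Metric.uniformContinuousOn_iff] at huc
  obtain ⟨d, hd0, hdc⟩ := huc δ' hδ'0
  -- number of cells
  set N : ℕ := ⌈2 * M / d⌉₊ + 1 with hNdef
  have hN0 : 0 < N := Nat.succ_pos _
  have hN0' : (0:ℝ) < N := Nat.cast_pos.mpr hN0
  set w : ℝ := 2 * M / N with hwdef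
  have hw0 : 0 < w := div_pos (by linarith) hN0'
  have hNw : (N:ℝ) * w = 2 * M := by rw [hwdef]; field_simp
  have hwd : w < d := by
    have h2M : 2 * M / d < (N:ℝ) := by
      have := Nat.le_ceil (2 * M / d)
      have hc : ((⌈2 * M / d⌉₊ : ℕ) : ℝ) + 1 = (N : ℝ) := by rw [hNdef]; push_cast; ring
      linarith
    have h2 : 2 * M < (N:ℝ) * d := by
      have := (div_lt_iff₀ hd0).mp h2M
      linarith
    nlinarith [hNw, hN0']
  -- tails at level 1/N
  obtain ⟨Λ, hΛ0, hΛtop, hΛbot⟩ := sigmoid_tails σ hσ_top hσ_bot (1 / N) (by positivity)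
  set lam : ℝ := 2 * Λ / w with hlamdef
  have hlam0 : 0 < lam := by positivity
  have hlamw : lam * (w / 2) = Λ := by rw [hlamdef]; field_simp
  clear_value lam
  -- grid points and jump points
  set tp : ℕ → ℝ := fun i => -M + i * w with htpdef
  set cp : ℕ → ℝ := fun k => -M + ((k : ℝ) + 1/2) * w with hcpdef
  set Δ : ℕ → ℝ := fun k => h (tp (k+1)) - h (tp k) with hΔdef
  have hmem : ∀ i : ℕ, i ≤ N → tp i ∈ Set.Icc (-M) M := by
    intro i hi
    have hi' : (i:ℝ) ≤ N := Nat.cast_le.mpr hi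
    have hi0 : (0:ℝ) ≤ i := Nat.cast_nonneg i
    constructor
    · simp only [htpdef]; nlinarith
    · simp only [htpdef]; nlinarith
  have hΔb : ∀ k : ℕ, k < N → |Δ k| ≤ δ' := by
    intro k hk
    have := hdc (tp (k+1)) (hmem _ hk) (tp k) (hmem _ hk.le)
    have hdist : dist (tp (k+1)) (tp k) = w := by
      rw [Real.dist_eq]
      have : tp (k+1) - tp k = w := by simp only [htpdef]; push_cast; ring
      rw [this, abs_of_pos hw0]
    rw [hdist] at this
    have := this hwd
    rw [Real.dist_eq] at this
    exact this.le
  have hN1 : (1:ℕ) ≤ N := hN0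
  clear_value tp cp Δ
  clear_value N w
  clear hNdef hwdef hlamdef
  refine ⟨N, fun j => Δ j, fun _ => lam, fun j => -lam * cp j, h (-M), fun t ht => ?_⟩
  -- rewrite the network sum
  have hsum : ∑ j : Fin N, Δ j * σ (lam * t + -lam * cp j)
      = ∑ k ∈ range N, Δ k * σ (lam * (t - cp k)) := by
    rw [← Fin.sum_univ_eq_sum_range (fun k => Δ k * σ (lam * (t - cp k))) N]
    exact Finset.sum_congr rfl (fun k _ => by ring_nf)
  rw [hsum]
  -- locate the cell containing t
  set u : ℝ := (t + M) / w with hudef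
  have hut : u * w = t + M := div_mul_cancel₀ _ (ne_of_gt hw0)
  have hu0 : 0 ≤ u := div_nonneg (by linarith [ht.1]) hw0.le
  have huN : u ≤ N := by
    rw [hudef, div_le_iff₀ hw0]
    have := ht.2
    linarith [hNw]
  set j : ℕ := min (N-1) ⌊u⌋₊ with hjdef
  have hjN : j < N := lt_of_le_of_lt (min_le_left _ _) (Nat.sub_lt hN0 one_pos)
  have hj1 : (j:ℝ) ≤ u := by
    have h1 : j ≤ ⌊u⌋₊ := min_le_right _ _
    have h2 : ((⌊u⌋₊ : ℕ) : ℝ) ≤ u := Nat.floor_le hu0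
    exact le_trans (Nat.cast_le.mpr h1) h2
  have hj2 : u ≤ (j:ℝ) + 1 := by
    rcases le_or_gt ⌊u⌋₊ (N-1) with hc | hc
    · have hje : j = ⌊u⌋₊ := min_eq_right hc
      rw [hje]
      exact (Nat.lt_floor_add_one u).le
    · have hje : j = N - 1 := min_eq_left hc.le
      rw [hje]
      have h1 : N - 1 + 1 = N := Nat.succ_pred_eq_of_pos hN0
      have h2 : ((N - 1 : ℕ) : ℝ) + 1 = (N : ℝ) := by exact_mod_cast congrArg (Nat.cast (R := ℝ)) h1
      linarith [huN]
  clear_value u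
  have htj : tp j ≤ t := by
    simp only [htpdef]
    nlinarith [mul_le_mul_of_nonneg_right hj1 hw0.le, hut]
  have htj1 : t ≤ tp (j+1) := by
    simp only [htpdef]
    push_cast
    nlinarith [mul_le_mul_of_nonneg_right hj2 hw0.le, hut]
  simp only [htpdef] at htj htj1
  push_cast at htj1
  clear_value j
  -- two tail estimates
  have hlow : ∀ k ∈ range j, |Δ k * σ (lam * (t - cp k)) - Δ k| ≤ δ' * (1 / N) := by
    intro k hk
    have hkj : k < j := mem_range.mp hk
    have hkj' : (k:ℝ) + 1 ≤ j := by exact_mod_cast hkj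
    have hcpb : w / 2 ≤ t - cp k := by
      simp only [hcpdef]
      nlinarith [mul_le_mul_of_nonneg_right hkj' hw0.le]
    have harg : Λ ≤ lam * (t - cp k) := by
      have := mul_le_mul_of_nonneg_left hcpb hlam0.le
      linarith [hlamw]
    have hσk := hΛtop _ harg
    have heq : |Δ k * σ (lam * (t - cp k)) - Δ k| = |Δ k| * |σ (lam * (t - cp k)) - 1| := by
      rw [← abs_mul]
      congr 1
      ring
    rw [heq]
    exact mul_le_mul (hΔb k (lt_trans hkj hjN)) hσk (abs_nonneg _) hδ'0.le
  have hhigh : ∀ k ∈ Finset.Ico (j+1) N, |Δ k * σ (lam * (t - cp k))| ≤ δ' * (1 / N) := by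
    intro k hk
    obtain ⟨hk1, hk2⟩ := Finset.mem_Ico.mp hk
    have hkj' : (j:ℝ) + 1 ≤ k := by exact_mod_cast hk1
    have hcpb : t - cp k ≤ -(w / 2) := by
      simp only [hcpdef]
      nlinarith [mul_le_mul_of_nonneg_right hkj' hw0.le]
    have harg : lam * (t - cp k) ≤ -Λ := by
      have := mul_le_mul_of_nonneg_left hcpb hlam0.le
      nlinarith [hlamw]
    have hσk := hΛbot _ harg
    rw [abs_mul]
    exact mul_le_mul (hΔb k hk2) hσk (abs_nonneg _) hδ'0.le
  -- decompose the sum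
  have hsplit : ∑ k ∈ range N, Δ k * σ (lam * (t - cp k))
      = (∑ k ∈ range j, Δ k * σ (lam * (t - cp k)))
        + Δ j * σ (lam * (t - cp j))
        + ∑ k ∈ Finset.Ico (j+1) N, Δ k * σ (lam * (t - cp k)) := by
    rw [Finset.range_eq_Ico, ← Finset.sum_Ico_consecutive _ (Nat.zero_le j) hjN.le,
      Finset.sum_eq_sum_Ico_succ_bot hjN, ← Finset.range_eq_Ico]
    ring
  have htel : ∑ k ∈ range j, Δ k = h (tp j) - h (-M) := by
    simp only [hΔdef]
    rw [Finset.sum_range_sub (fun i => h (tp i)) j]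
    have h0 : tp 0 = -M := by simp [htpdef]
    rw [h0]
  -- the four error terms
  have hT1 : |∑ k ∈ range j, Δ k * σ (lam * (t - cp k)) - ∑ k ∈ range j, Δ k| ≤ δ' := by
    rw [← Finset.sum_sub_distrib]
    calc |∑ k ∈ range j, (Δ k * σ (lam * (t - cp k)) - Δ k)|
        ≤ ∑ k ∈ range j, |Δ k * σ (lam * (t - cp k)) - Δ k| := Finset.abs_sum_le_sum_abs _ _
      _ ≤ (range j).card • (δ' * (1 / N)) := Finset.sum_le_card_nsmul _ _ _ hlow
      _ = (j : ℝ) * (δ' * (1 / N)) := by rw [Finset.card_range, nsmul_eq_mul]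
      _ ≤ (N : ℝ) * (δ' * (1 / N)) :=
          mul_le_mul_of_nonneg_right (Nat.cast_le.mpr hjN.le) (by positivity)
      _ = δ' := by field_simp
  have hT3 : |∑ k ∈ Finset.Ico (j+1) N, Δ k * σ (lam * (t - cp k))| ≤ δ' := by
    calc |∑ k ∈ Finset.Ico (j+1) N, Δ k * σ (lam * (t - cp k))|
        ≤ ∑ k ∈ Finset.Ico (j+1) N, |Δ k * σ (lam * (t - cp k))| :=
          Finset.abs_sum_le_sum_abs _ _
      _ ≤ (Finset.Ico (j+1) N).card • (δ' * (1 / N)) := Finset.sum_le_card_nsmul _ _ _ hhigh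
      _ = ((N - (j+1) : ℕ) : ℝ) * (δ' * (1 / N)) := by rw [Nat.card_Ico, nsmul_eq_mul]
      _ ≤ (N : ℝ) * (δ' * (1 / N)) :=
          mul_le_mul_of_nonneg_right (Nat.cast_le.mpr (Nat.sub_le _ _)) (by positivity)
      _ = δ' := by field_simp
  have hT2 : |Δ j * σ (lam * (t - cp j))| ≤ δ' * B := by
    rw [abs_mul]
    exact mul_le_mul (hΔb j hjN) (hB _) (abs_nonneg _) hδ'0.le
  have hT4 : |h (tp j) - h t| < δ' := by
    have hd1 : dist (tp j) t < d := by
      rw [Real.dist_eq, abs_sub_lt_iff]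
      simp only [htpdef] at htj htj1 ⊢
      constructor <;> nlinarith
    have := hdc (tp j) (hmem j hjN.le) t ht hd1
    rwa [Real.dist_eq] at this
  have key : ∑ k ∈ range N, Δ k * σ (lam * (t - cp k)) + h (-M) - h t
      = (∑ k ∈ range j, Δ k * σ (lam * (t - cp k)) - ∑ k ∈ range j, Δ k)
        + Δ j * σ (lam * (t - cp j))
        + ∑ k ∈ Finset.Ico (j+1) N, Δ k * σ (lam * (t - cp k))
        + (h (tp j) - h t) := by
    rw [hsplit, htel]; ring
  rw [key]
  have habs : ∀ a b c e : ℝ, |a + b + c + e| ≤ |a| + |b| + |c| + |e| := by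
    intro a b c e
    calc |a + b + c + e| ≤ |a + b + c| + |e| := abs_add_le _ _
      _ ≤ (|a + b| + |c|) + |e| := by linarith [abs_add_le (a + b) c]
      _ ≤ ((|a| + |b|) + |c|) + |e| := by linarith [abs_add_le a b]
  calc |_ + _ + _ + _| ≤ _ := habs _ _ _ _
    _ < δ' + δ' * B + δ' + δ' := by linarith
    _ = δ := by linarith [hδ'sum]

end AuxLemmas

set_option maxHeartbeats 1000000 in
open Finset in
/-- Universal approximation theorem (Cybenko): if `σ` is a continuous sigmoidal
function (`σ(t) → 1` as `t → +∞`, `σ(t) → 0` as `t → −∞`), `K ⊆ ℝⁿ` is compact and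
`g : K → ℝ` is continuous, then for every `ε > 0` there is a single-hidden-layer
network `f(x) = Σ_{i=1}^m a_i σ(⟨w_i, x⟩ + b_i) + b` with `|f(x) − g(x)| < ε`
for all `x ∈ K`. -/
theorem universal_approximation
    {n : ℕ} (σ : ℝ → ℝ) (hσ_cont : Continuous σ)
    (hσ_top : Tendsto σ atTop (nhds 1))
    (hσ_bot : Tendsto σ atBot (nhds 0))
    (K : Set (EuclideanSpace ℝ (Fin n))) (hK : IsCompact K)
    (g : EuclideanSpace ℝ (Fin n) → ℝ) (hg : ContinuousOn g K)
    (ε : ℝ) (hε : 0 < ε) :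
    ∃ (m : ℕ) (a : Fin m → ℝ) (w : Fin m → EuclideanSpace ℝ (Fin n))
      (b : Fin m → ℝ) (b₀ : ℝ),
      ∀ x ∈ K,
        |(∑ i, a i * σ ((inner ℝ (w i) x : ℝ) + b i) + b₀) - g x| < ε := by
  classical
  let E := EuclideanSpace ℝ (Fin n)
  obtain ⟨R, hR⟩ := isBounded_iff_forall_norm_le.mp hK.isBounded
  set R' : ℝ := max R 0 with hR'def
  have hR'0 : 0 ≤ R' := le_max_right _ _
  have hR' : ∀ x ∈ K, ‖x‖ ≤ R' := fun x hx => le_trans (hR x hx) (le_max_left _ _)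
  haveI : CompactSpace K := isCompact_iff_compactSpace.mp hK
  set gK : C(K, ℝ) := ⟨K.restrict g, hg.restrict⟩ with hgKdef
  set er : E → C(K, ℝ) := fun w =>
    ⟨fun x => Real.exp (inner ℝ w (x : E)),
     Real.continuous_exp.comp (Continuous.inner continuous_const continuous_subtype_val)⟩
    with herdef
  set S : Set C(K, ℝ) := Set.range er with hSdef
  -- S is a submonoid
  have hone : (1 : C(K, ℝ)) ∈ S := ⟨0, by ext x; simp [herdef]⟩
  have hmul : ∀ f ∈ S, ∀ f' ∈ S, f * f' ∈ S := by
    rintro _ ⟨w₁, rfl⟩ _ ⟨w₂, rfl⟩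
    exact ⟨w₁ + w₂, by ext x; simp [herdef, inner_add_left, Real.exp_add]⟩
  set Smon : Submonoid C(K, ℝ) :=
    { carrier := S, one_mem' := hone,
      mul_mem' := fun {a b} ha hb => hmul a ha b hb } with hSmon
  -- the adjoined subalgebra separates points
  have hsep : (Algebra.adjoin ℝ S).SeparatesPoints := by
    intro x y hxy
    have hxy' : (x : E) ≠ (y : E) := fun h => hxy (Subtype.coe_injective h)
    refine ⟨_, ⟨er ((x : E) - (y : E)), Algebra.subset_adjoin ⟨_, rfl⟩, rfl⟩, ?_⟩
    simp only [herdef, ContinuousMap.coe_mk]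
    intro hcontra
    have h2 : (inner ℝ ((x:E) - (y:E)) ((x:E)) : ℝ) = inner ℝ ((x:E) - (y:E)) ((y:E)) :=
      Real.exp_injective hcontra
    have h3 : (inner ℝ ((x:E) - (y:E)) ((x:E) - (y:E)) : ℝ) = 0 := by
      rw [inner_sub_right]; linarith
    exact hxy' (sub_eq_zero.mp (inner_self_eq_zero.mp h3))
  have htop := ContinuousMap.subalgebra_topologicalClosure_eq_top_of_separatesPoints
    (Algebra.adjoin ℝ S) hsep
  have hgcl : gK ∈ closure ((Algebra.adjoin ℝ S : Subalgebra ℝ C(K, ℝ)) : Set C(K, ℝ)) := by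
    have : gK ∈ (Algebra.adjoin ℝ S).topologicalClosure := by
      rw [htop]; exact Algebra.mem_top
    exact this
  obtain ⟨f, hfA, hfd⟩ := Metric.mem_closure_iff.mp hgcl (ε/2) (half_pos hε)
  -- f lies in the span of S
  have hspan : f ∈ Submodule.span ℝ S := by
    have h1 : f ∈ Subalgebra.toSubmodule (Algebra.adjoin ℝ S) := hfA
    rw [Algebra.adjoin_eq_span] at h1
    have hcl : (Submonoid.closure S : Set C(K, ℝ)) ⊆ S :=
      Submonoid.closure_le.mpr (le_refl (Smon : Set C(K, ℝ)))
    exact Submodule.span_mono hcl h1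
  rw [Submodule.mem_span_set'] at hspan
  obtain ⟨p, c, v, hv⟩ := hspan
  choose wv hwv using fun i => (v i).2
  have hfx : ∀ x : K, f x = ∑ i, c i * Real.exp (inner ℝ (wv i) (x : E)) := by
    intro x
    rw [← hv]
    rw [ContinuousMap.sum_apply]
    refine Finset.sum_congr rfl fun i _ => ?_
    rw [ContinuousMap.smul_apply, smul_eq_mul]
    congr 1
    rw [← hwv i]
    simp [herdef]
  -- one-dimensional approximations of exp on the relevant ranges
  have key : ∀ i : Fin p, ∃ (m : ℕ) (a lam b : Fin m → ℝ) (cst : ℝ),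
      ∀ t ∈ Set.Icc (-(‖wv i‖ * R' + 1)) (‖wv i‖ * R' + 1),
        |(∑ j, a j * σ (lam j * t + b j) + cst) - Real.exp t|
          < ε / (2 * (p + 1) * (|c i| + 1)) := by
    intro i
    exact oneD σ hσ_cont hσ_top hσ_bot Real.exp Real.continuous_exp _ _
      (by positivity) (by positivity)
  choose m a lam bb cst hnet using key
  -- assemble the network
  set ι := (i : Fin p) × Fin (m i) with hι
  set e := (Fintype.equivFin ι).symm with hedef
  refine ⟨Fintype.card ι,
    fun k => c (e k).1 * a (e k).1 (e k).2,
    fun k => lam (e k).1 (e k).2 • wv (e k).1,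
    fun k => bb (e k).1 (e k).2,
    ∑ i, c i * cst i,
    fun x hx => ?_⟩
  have hx' : (⟨x, hx⟩ : K) = (⟨x, hx⟩ : K) := rfl
  set xK : K := ⟨x, hx⟩ with hxK
  -- rewrite the network sum over the sigma type
  have hre : ∑ k, (c (e k).1 * a (e k).1 (e k).2)
        * σ ((inner ℝ (lam (e k).1 (e k).2 • wv (e k).1) x : ℝ) + bb (e k).1 (e k).2)
      = ∑ i, c i * (∑ j, a i j * σ (lam i j * (inner ℝ (wv i) x : ℝ) + bb i j)) := by
    rw [Equiv.sum_comp e (fun q : ι => (c q.1 * a q.1 q.2)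
      * σ ((inner ℝ (lam q.1 q.2 • wv q.1) x : ℝ) + bb q.1 q.2))]
    rw [← Finset.univ_sigma_univ, ← Finset.sum_sigma' Finset.univ (fun _ => Finset.univ)
      (fun i j => (c i * a i j) * σ ((inner ℝ (lam i j • wv i) x : ℝ) + bb i j))]
    refine Finset.sum_congr rfl fun i _ => ?_
    rw [Finset.mul_sum]
    refine Finset.sum_congr rfl fun j _ => ?_
    rw [real_inner_smul_left]
    ring
  rw [hre]
  -- compare with f and then with g
  have hti : ∀ i : Fin p, (inner ℝ (wv i) x : ℝ) ∈
      Set.Icc (-(‖wv i‖ * R' + 1)) (‖wv i‖ * R' + 1) := by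
    intro i
    have h1 : |(inner ℝ (wv i) x : ℝ)| ≤ ‖wv i‖ * ‖x‖ := abs_real_inner_le_norm _ _
    have h2 : ‖wv i‖ * ‖x‖ ≤ ‖wv i‖ * R' :=
      mul_le_mul_of_nonneg_left (hR' x hx) (norm_nonneg _)
    rw [Set.mem_Icc, ← abs_le]
    calc |(inner ℝ (wv i) x : ℝ)| ≤ ‖wv i‖ * R' := le_trans h1 h2
      _ ≤ ‖wv i‖ * R' + 1 := by linarith
  have herr : ∀ i : Fin p,
      |c i * (∑ j, a i j * σ (lam i j * (inner ℝ (wv i) x : ℝ) + bb i j) + cst i)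
        - c i * Real.exp (inner ℝ (wv i) x : ℝ)| ≤ ε / (2 * (p + 1)) := by
    intro i
    rw [← mul_sub, abs_mul]
    have h1 := (hnet i _ (hti i)).le
    calc |c i| * |(∑ j, a i j * σ (lam i j * (inner ℝ (wv i) x : ℝ) + bb i j) + cst i)
          - Real.exp (inner ℝ (wv i) x : ℝ)|
        ≤ (|c i| + 1) * (ε / (2 * (p + 1) * (|c i| + 1))) := by
          apply mul_le_mul (by linarith [abs_nonneg (c i)]) h1 (abs_nonneg _)
          positivity
      _ = ε / (2 * (p + 1)) := by
          have : (0:ℝ) < |c i| + 1 := by positivity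
          field_simp
  -- total error
  have hsum1 : |∑ i, c i * (∑ j, a i j * σ (lam i j * (inner ℝ (wv i) x : ℝ) + bb i j) + cst i)
      - ∑ i, c i * Real.exp (inner ℝ (wv i) x : ℝ)| ≤ ε / 2 := by
    rw [← Finset.sum_sub_distrib]
    calc |∑ i, (c i * (∑ j, a i j * σ (lam i j * (inner ℝ (wv i) x : ℝ) + bb i j) + cst i)
          - c i * Real.exp (inner ℝ (wv i) x : ℝ))|
        ≤ ∑ i, |c i * (∑ j, a i j * σ (lam i j * (inner ℝ (wv i) x : ℝ) + bb i j) + cst i)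
          - c i * Real.exp (inner ℝ (wv i) x : ℝ)| := Finset.abs_sum_le_sum_abs _ _
      _ ≤ (Finset.univ : Finset (Fin p)).card • (ε / (2 * (p + 1))) :=
          Finset.sum_le_card_nsmul _ _ _ (fun i _ => herr i)
      _ = (p : ℝ) * (ε / (2 * (p + 1))) := by rw [Finset.card_univ, Fintype.card_fin, nsmul_eq_mul]
      _ ≤ ε / 2 := by
          have hple : (p:ℝ)/((p:ℝ)+1) ≤ 1 := by
            rw [div_le_one (by positivity)]; linarith
          have h2 : (p:ℝ) * (ε / (2 * ((p:ℝ) + 1))) = ε / 2 * ((p:ℝ) / ((p:ℝ)+1)) := by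
            field_simp
          rw [h2]
          nlinarith [half_pos hε, hple, (Nat.cast_nonneg p : (0:ℝ) ≤ p)]
  have hsum2 : |f xK - g x| < ε / 2 := by
    have h1 : dist (gK xK) (f xK) ≤ dist gK f := ContinuousMap.dist_apply_le_dist xK
    have h2 : gK xK = g x := rfl
    rw [Real.dist_eq] at h1
    have := lt_of_le_of_lt h1 hfd
    rw [h2] at this
    rw [abs_sub_comm]
    exact this
  have hfxx := hfx xK
  have hinner : ∀ i : Fin p, (inner ℝ (wv i) (xK : E) : ℝ) = (inner ℝ (wv i) x : ℝ) := fun i => rfl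
  -- combine
  have hsplit2 : ∑ i, c i * (∑ j, a i j * σ (lam i j * (inner ℝ (wv i) x : ℝ) + bb i j))
      + ∑ i, c i * cst i
      = ∑ i, c i * (∑ j, a i j * σ (lam i j * (inner ℝ (wv i) x : ℝ) + bb i j) + cst i) := by
    rw [← Finset.sum_add_distrib]
    exact Finset.sum_congr rfl fun i _ => by ring
  rw [hsplit2]
  have hfinal : ∑ i, c i * Real.exp (inner ℝ (wv i) x : ℝ) = f xK := by
    rw [hfxx]
  calc |∑ i, c i * (∑ j, a i j * σ (lam i j * (inner ℝ (wv i) x : ℝ) + bb i j) + cst i) - g x|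
      ≤ |∑ i, c i * (∑ j, a i j * σ (lam i j * (inner ℝ (wv i) x : ℝ) + bb i j) + cst i)
          - ∑ i, c i * Real.exp (inner ℝ (wv i) x : ℝ)|
        + |∑ i, c i * Real.exp (inner ℝ (wv i) x : ℝ) - g x| := abs_sub_le _ _ _
    _ < ε / 2 + ε / 2 := by
        apply add_lt_add_of_le_of_lt hsum1
        rw [hfinal]
        exact hsum2
    _ = ε := by ring
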